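/- Let r, k be natural numbers with 1 ≤ k ≤ r. Then ∑_{j=r+1}^{2r} (-1)^j · C(2r, j) · (j-r)^{2k} equals 0 if k < r, and equals (2r)!/2 if k = r. -/

import Mathlib

open Finset Function fwdDiff

lemma pow_fwdDiff (m : ℕ) : Δ_[(1:ℚ)] (fun x : ℚ => x ^ m)
    = fun x => ∑ t ∈ Finset.range m, (m.choose t : ℚ) * x ^ t := by
  funext x
  simp only [fwdDiff]
  rw [add_pow, Finset.sum_range_succ]
  simp [mul_comm]

lemma fwdDiff_pow_lt : ∀ m n : ℕ, m < n → ∀ y : ℚ,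
    (Δ_[(1:ℚ)])^[n] (fun x : ℚ => x ^ m) y = 0 := by
  intro m
  induction m using Nat.strong_induction_on with
  | _ m IH =>
    intro n hmn y
    obtain ⟨n', rfl⟩ : ∃ n', n = n' + 1 := ⟨n - 1, by omega⟩
    rw [Function.iterate_succ_apply, pow_fwdDiff]
    have : (fun x : ℚ => ∑ t ∈ Finset.range m, (m.choose t : ℚ) * x ^ t)
        = ∑ t ∈ Finset.range m, (m.choose t : ℚ) • (fun x : ℚ => x ^ t) := by
      funext x; simp [Finset.sum_apply]
    rw [this, fwdDiff_iter_finset_sum, Finset.sum_apply]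
    refine Finset.sum_eq_zero fun t ht => ?_
    simp only [Finset.mem_range] at ht
    have := IH t ht n' (by omega) y
    simp [fwdDiff_iter_const_smul, this]

lemma fwdDiff_pow_self : ∀ n : ℕ, ∀ y : ℚ,
    (Δ_[(1:ℚ)])^[n] (fun x : ℚ => x ^ n) y = n.factorial := by
  intro n
  induction n with
  | zero => intro y; simp
  | succ n IH =>
    intro y
    rw [Function.iterate_succ_apply, pow_fwdDiff]
    have : (fun x : ℚ => ∑ t ∈ Finset.range (n+1), ((n+1).choose t : ℚ) * x ^ t)
        = ∑ t ∈ Finset.range (n+1), ((n+1).choose t : ℚ) • (fun x : ℚ => x ^ t) := by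
      funext x; simp [Finset.sum_apply]
    rw [this, fwdDiff_iter_finset_sum, Finset.sum_apply, Finset.sum_range_succ]
    rw [Finset.sum_eq_zero fun t ht => ?_]
    · simp only [Pi.smul_apply, smul_eq_mul, zero_add, fwdDiff_iter_const_smul, IH y,
        Nat.choose_succ_self_right]
      push_cast [Nat.factorial_succ]
      ring
    · simp only [Finset.mem_range] at ht
      simp [fwdDiff_iter_const_smul, fwdDiff_pow_lt t n ht y]

lemma key_sum (n : ℕ) (f : ℚ → ℚ) :
    ∑ j ∈ Finset.range (n+1), (-1:ℚ)^j * (n.choose j : ℚ) * f j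
      = (-1:ℚ)^n * (Δ_[(1:ℚ)])^[n] f 0 := by
  rw [fwdDiff_iter_eq_sum_shift, Finset.mul_sum]
  refine Finset.sum_congr rfl fun j hj => ?_
  simp only [Finset.mem_range] at hj
  have hj' : j ≤ n := by omega
  have h2 : (-1:ℚ)^n * (-1:ℚ)^(n-j) = (-1:ℚ)^j := by
    rw [← pow_add, show n + (n-j) = 2*(n-j)+j by omega, pow_add, pow_mul]
    norm_num
  have h0 : (0:ℚ) + j • (1:ℚ) = (j:ℚ) := by simp
  rw [h0]
  push_cast [zsmul_eq_mul]
  linear_combination (-(n.choose j : ℚ) * f j) * h2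

lemma diff_part (r k : ℕ) (hk1 : 1 ≤ k) (hkr : k ≤ r) :
    (Δ_[(1:ℚ)])^[2*r] (fun x : ℚ => (x - r) ^ (2*k)) 0
      = if k < r then 0 else ((2*r).factorial : ℚ) := by
  have hexp : (fun x : ℚ => (x - r) ^ (2*k))
      = ∑ t ∈ Finset.range (2*k+1),
          (((2*k).choose t : ℚ) * (-(r:ℚ))^(2*k - t)) • (fun x : ℚ => x ^ t) := by
    funext x
    rw [Finset.sum_apply]
    rw [show x - (r:ℚ) = x + (-(r:ℚ)) by ring, add_pow]
    refine Finset.sum_congr rfl fun t ht => ?_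
    simp only [Pi.smul_apply, smul_eq_mul]
    ring
  rw [hexp, fwdDiff_iter_finset_sum, Finset.sum_apply]
  rcases lt_or_eq_of_le hkr with hlt | rfl
  · rw [if_pos hlt]
    refine Finset.sum_eq_zero fun t ht => ?_
    simp only [Finset.mem_range] at ht
    simp [fwdDiff_iter_const_smul, fwdDiff_pow_lt t (2*r) (by omega) 0]
  · rw [if_neg (lt_irrefl _), Finset.sum_range_succ,
      Finset.sum_eq_zero fun t ht => ?_]
    · simp [fwdDiff_iter_const_smul, fwdDiff_pow_self (2*k) 0]
    · simp only [Finset.mem_range] at ht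
      simp [fwdDiff_iter_const_smul, fwdDiff_pow_lt t (2*k) ht 0]

theorem stmt1 (r k : ℕ) (hk1 : 1 ≤ k) (hkr : k ≤ r) :
    (∑ j ∈ Finset.Icc (r + 1) (2 * r),
        (-1 : ℚ) ^ j * ((2 * r).choose j) * ((j : ℚ) - r) ^ (2 * k))
      = if k < r then 0 else ((2 * r).factorial : ℚ) / 2 := by
  set g : ℕ → ℚ := fun j => (-1 : ℚ) ^ j * ((2 * r).choose j) * ((j : ℚ) - r) ^ (2 * k) with hg
  have hS : ∑ j ∈ Finset.range (2*r+1), g j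
      = if k < r then 0 else ((2*r).factorial : ℚ) := by
    have := key_sum (2*r) (fun x : ℚ => (x - r) ^ (2*k))
    rw [hg]
    simp only at this ⊢
    rw [this, diff_part r k hk1 hkr]
    simp [pow_mul]
  have hsplit : ∑ j ∈ Finset.range (2*r+1), g j
      = (∑ j ∈ Finset.range (r+1), g j) + ∑ j ∈ Finset.Icc (r+1) (2*r), g j := by
    rw [show Finset.Icc (r+1) (2*r) = Finset.Ico (r+1) (2*r+1) from (Finset.Ico_add_one_right_eq_Icc _ _).symm,
      Finset.range_eq_Ico, Finset.range_eq_Ico,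
      ← Finset.sum_Ico_consecutive _ (by omega : 0 ≤ r+1) (by omega : r+1 ≤ 2*r+1)]
  have hgr : g r = 0 := by
    simp only [hg, sub_self]
    rw [zero_pow (by omega)]
    ring
  have hrefl : ∑ j ∈ Finset.range r, g j = ∑ j ∈ Finset.Icc (r+1) (2*r), g j := by
    refine Finset.sum_nbij' (fun j => 2*r - j) (fun j => 2*r - j) ?_ ?_ ?_ ?_ ?_
    · intro a ha; simp only [Finset.mem_range] at ha; simp only [Finset.mem_Icc]; omega
    · intro a ha; simp only [Finset.mem_Icc] at ha; simp only [Finset.mem_range]; omega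
    · intro a ha; simp only [Finset.mem_range] at ha
      show 2*r - (2*r - a) = a; omega
    · intro a ha; simp only [Finset.mem_Icc] at ha
      show 2*r - (2*r - a) = a; omega
    · intro a ha
      simp only [Finset.mem_range] at ha
      simp only [hg]
      have h1 : (-1:ℚ)^(2*r - a) = (-1:ℚ)^a := by
        have h2 : (-1:ℚ)^(2*r-a) * (-1:ℚ)^a = 1 := by
          rw [← pow_add, show 2*r - a + a = 2*r by omega]; simp [pow_mul]
        calc (-1:ℚ)^(2*r-a) = (-1:ℚ)^(2*r-a) * ((-1:ℚ)^a * (-1:ℚ)^a) := by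
              rw [← pow_add, ← two_mul]; simp [pow_mul]
          _ = ((-1:ℚ)^(2*r-a) * (-1:ℚ)^a) * (-1:ℚ)^a := by ring
          _ = (-1:ℚ)^a := by rw [h2, one_mul]
      have h3 : (2*r).choose (2*r - a) = (2*r).choose a := Nat.choose_symm (by omega)
      have h4 : ((2*r - a : ℕ) : ℚ) = 2*r - a := by push_cast [Nat.cast_sub (by omega : a ≤ 2*r)]; ring
      rw [h1, h3, h4]
      have h5 : ((2*(r:ℚ) - a) - r) = -((a:ℚ) - r) := by push_cast; ring
      rw [h5, Even.neg_pow (even_two_mul k)]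
  have : (∑ j ∈ Finset.range (r+1), g j) = ∑ j ∈ Finset.Icc (r+1) (2*r), g j := by
    rw [Finset.sum_range_succ, hgr, add_zero, hrefl]
  have hfinal : 2 * ∑ j ∈ Finset.Icc (r+1) (2*r), g j
      = if k < r then 0 else ((2*r).factorial : ℚ) := by
    rw [← hS, hsplit, this]; ring
  rcases lt_or_eq_of_le hkr with hlt | rfl
  · rw [if_pos hlt] at hfinal ⊢
    have := hfinal
    linarith
  · rw [if_neg (lt_irrefl _)] at hfinal ⊢
    linarith
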